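/- Let ℱ be a nonempty closed convex set of free states, 𝔉 a set of channels each of which maps ℱ into ℱ, and assume that for every σ ∈ ℱ the replacement channel τ ↦ Tr(τ)σ belongs to 𝔉. Then for every channel N and every probe state ρ ∈ D(H), the success probability of discriminating N from 𝔉 with probe state ρ is bounded as p_succ(N, 𝔉, ρ) ≤ 1/2 + (1/2)·Ω₁(N) + (1/2)·ω₁(ρ). -/

import Mathlib

open scoped Kronecker ComplexOrder

variable {ι : Type*} [Fintype ι] [DecidableEq ι]

/-- A quantum state: positive semidefinite matrix of trace one. -/
def IsState (ρ : Matrix ι ι ℂ) : Prop := ρ.PosSemidef ∧ ρ.trace = 1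

/-- The action of `id_n ⊗ N` on block matrices. -/
def idTensorMap (n : ℕ) (N : Matrix ι ι ℂ →ₗ[ℂ] Matrix ι ι ℂ)
    (M : Matrix (Fin n × ι) (Fin n × ι) ℂ) : Matrix (Fin n × ι) (Fin n × ι) ℂ :=
  Matrix.of fun p q => N (Matrix.of fun k l => M (p.1, k) (q.1, l)) p.2 q.2

/-- A quantum channel: completely positive trace preserving linear map. -/
structure Channel (ι : Type*) [Fintype ι] [DecidableEq ι] where
  map : Matrix ι ι ℂ →ₗ[ℂ] Matrix ι ι ℂ
  cp : ∀ (n : ℕ) (M : Matrix (Fin n × ι) (Fin n × ι) ℂ), M.PosSemidef →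
        (idTensorMap n map M).PosSemidef
  tp : ∀ A : Matrix ι ι ℂ, (map A).trace = A.trace

/-- The trace norm ‖A‖₁ = Tr √(AᴴA). -/
noncomputable def traceNorm (A : Matrix ι ι ℂ) : ℝ :=
  (((Matrix.posSemidef_conjTranspose_mul_self A).1.eigenvectorUnitary : Matrix ι ι ℂ) *
      Matrix.diagonal (((↑) : ℝ → ℂ) ∘ (√· : ℝ → ℝ) ∘ (Matrix.posSemidef_conjTranspose_mul_self A).1.eigenvalues) *
      (star (Matrix.posSemidef_conjTranspose_mul_self A).1.eigenvectorUnitary : Matrix ι ι ℂ)).trace.re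

/-- Trace-norm resource measure ω₁. -/
noncomputable def omega1 (F : Set (Matrix ι ι ℂ)) (ρ : Matrix ι ι ℂ) : ℝ :=
  (1/2) * sInf ((fun σ => traceNorm (ρ - σ)) '' F)

/-- Trace-norm resource generating power Ω₁. -/
noncomputable def genPower1 (F : Set (Matrix ι ι ℂ)) (N : Matrix ι ι ℂ → Matrix ι ι ℂ) : ℝ :=
  sSup ((fun ρ => omega1 F (N ρ)) '' F)

/-- Trace-norm resource increasing power Ω̃₁. -/
noncomputable def incPower1 (F : Set (Matrix ι ι ℂ)) (N : Matrix ι ι ℂ → Matrix ι ι ℂ) : ℝ :=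
  sSup ((fun ρ => omega1 F (N ρ) - omega1 F ρ) '' {ρ | IsState ρ})

/-- Holevo–Helstrom success probability of discriminating two channels with probe `ρ`. -/
noncomputable def psuccPair (N M : Matrix ι ι ℂ → Matrix ι ι ℂ) (ρ : Matrix ι ι ℂ) : ℝ :=
  1/2 + (1/4) * traceNorm (N ρ - M ρ)

/-- Success probability of discriminating `N` from the set of channels `Free` with probe `ρ`. -/
noncomputable def psuccChan (N : Matrix ι ι ℂ → Matrix ι ι ℂ) (Free : Set (Channel ι))
    (ρ : Matrix ι ι ℂ) : ℝ :=
  sInf ((fun M : Channel ι => psuccPair N (⇑M.map) ρ) '' Free)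

/-- Maximum success probability of discriminating `N` from `Free` using probes from `F`. -/
noncomputable def psuccFF (N : Matrix ι ι ℂ → Matrix ι ι ℂ) (Free : Set (Channel ι))
    (F : Set (Matrix ι ι ℂ)) : ℝ :=
  sSup ((fun ρ => psuccChan N Free ρ) '' F)

/-! ### Auxiliary lemmas -/

namespace Aux

set_option linter.unusedSectionVars false

open Matrix

lemma conj_mul {U X Y : Matrix ι ι ℂ} (hU : star U * U = 1) :
    (U * X * star U) * (U * Y * star U) = U * (X * Y) * star U := by
  calc (U * X * star U) * (U * Y * star U)
      = U * X * (star U * U * (Y * star U)) := by simp only [Matrix.mul_assoc]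
    _ = U * (X * Y) * star U := by
        rw [hU, Matrix.one_mul, ← Matrix.mul_assoc, ← Matrix.mul_assoc]

lemma inner_conj_mul {U X Y : Matrix ι ι ℂ} (hU2 : U * star U = 1) :
    (star U * X * U) * (star U * Y * U) = star U * (X * Y) * U := by
  calc (star U * X * U) * (star U * Y * U)
      = star U * X * (U * star U * (Y * U)) := by simp only [Matrix.mul_assoc]
    _ = star U * (X * Y) * U := by
        rw [hU2, Matrix.one_mul, ← Matrix.mul_assoc, ← Matrix.mul_assoc]

lemma conj_cancel {U X : Matrix ι ι ℂ} (hU2 : U * star U = 1) :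
    U * (star U * X * U) * star U = X := by
  calc U * (star U * X * U) * star U
      = (U * star U) * X * (U * star U) := by simp only [Matrix.mul_assoc]
    _ = X := by rw [hU2, Matrix.one_mul, Matrix.mul_one]

lemma conj_trace {U : Matrix ι ι ℂ} (X : Matrix ι ι ℂ) (hU : star U * U = 1) :
    (U * X * star U).trace = X.trace := by
  rw [Matrix.trace_mul_comm, ← Matrix.mul_assoc, hU, Matrix.one_mul]

lemma conj_psd {U X : Matrix ι ι ℂ} (hX : X.PosSemidef) :
    (U * X * star U).PosSemidef := by
  rw [Matrix.star_eq_conjTranspose]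
  exact hX.mul_mul_conjTranspose_same U

lemma psd_trace_re_nonneg {X : Matrix ι ι ℂ} (hX : X.PosSemidef) : 0 ≤ X.trace.re := by
  have h : ∀ i, 0 ≤ (X i i).re := by
    intro i
    have := hX.re_dotProduct_nonneg (Pi.single i 1)
    simpa [dotProduct, Matrix.mulVec, Pi.single_apply] using this
  rw [Matrix.trace, Complex.re_sum]
  exact Finset.sum_nonneg fun i _ => h i

lemma traceNorm_nonneg (A : Matrix ι ι ℂ) : 0 ≤ traceNorm A :=
  psd_trace_re_nonneg (conj_psd (Matrix.PosSemidef.diagonal (fun i => by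
    simp only [Pi.zero_apply, Function.comp_apply]; rw [Complex.zero_le_real]
    exact Real.sqrt_nonneg _)))

/-- trace norm of a Hermitian matrix is the sum of the absolute values of eigenvalues. -/
lemma traceNorm_eq_sum_abs {A : Matrix ι ι ℂ} (hA : A.IsHermitian) :
    traceNorm A = ∑ i, |hA.eigenvalues i| := by
  have hU1 : star (hA.eigenvectorUnitary : Matrix ι ι ℂ) * (hA.eigenvectorUnitary : Matrix ι ι ℂ)
      = 1 := mem_unitaryGroup_iff'.mp hA.eigenvectorUnitary.2
  have hU2 : (hA.eigenvectorUnitary : Matrix ι ι ℂ) * star (hA.eigenvectorUnitary : Matrix ι ι ℂ)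
      = 1 := mem_unitaryGroup_iff.mp hA.eigenvectorUnitary.2
  set U : Matrix ι ι ℂ := (hA.eigenvectorUnitary : Matrix ι ι ℂ)
  have hdiag : star U * A * U = Matrix.diagonal (RCLike.ofReal ∘ hA.eigenvalues) :=
    by simpa using hA.conjStarAlgAut_star_eigenvectorUnitary
  have hAA : Aᴴ * A = U * (Matrix.diagonal (RCLike.ofReal ∘ hA.eigenvalues) *
      Matrix.diagonal (RCLike.ofReal ∘ hA.eigenvalues)) * star U := by
    rw [← hdiag, inner_conj_mul hU2, conj_cancel hU2, hA.eq]
  have hS : (U * Matrix.diagonal (fun i => ((|hA.eigenvalues i| : ℝ) : ℂ)) * star U).PosSemidef :=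
    conj_psd (Matrix.PosSemidef.diagonal (fun i => by
      simp only [Pi.zero_apply]; rw [Complex.zero_le_real]; exact abs_nonneg _))
  have hsq : (U * Matrix.diagonal (fun i => ((|hA.eigenvalues i| : ℝ) : ℂ)) * star U) ^ 2
      = Aᴴ * A := by
    have hfun : (fun i => ((|hA.eigenvalues i| : ℝ) : ℂ) * ((|hA.eigenvalues i| : ℝ) : ℂ))
        = (fun i => (RCLike.ofReal ∘ hA.eigenvalues) i * (RCLike.ofReal ∘ hA.eigenvalues) i) := by
      funext i
      simp only [Function.comp_apply]
      norm_cast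
      rw [abs_mul_abs_self]
      rfl
    rw [pow_two, conj_mul hU1, hAA, Matrix.diagonal_mul_diagonal, Matrix.diagonal_mul_diagonal,
      hfun]
  have hsa : IsSelfAdjoint A := hA
  have habs : cfc (fun x : ℝ => |x|) A = cfc Real.sqrt (Aᴴ * A) := by
    have h1 : (fun x : ℝ => |x|) = fun x => Real.sqrt ((fun y : ℝ => y * y) x) :=
      funext fun x => (Real.sqrt_mul_self_eq_abs x).symm
    rw [h1, cfc_comp' Real.sqrt (fun y : ℝ => y * y) A, cfc_mul (fun y : ℝ => y) (fun y : ℝ => y) A,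
      cfc_id' ℝ A, hA.eq]
  have htn : traceNorm A = (cfc Real.sqrt (Aᴴ * A)).trace.re := by
    rw [IsHermitian.cfc_eq (posSemidef_conjTranspose_mul_self A).1, IsHermitian.cfc,
      Unitary.conjStarAlgAut_apply]
    rfl
  rw [htn, ← habs, IsHermitian.cfc_eq hA, IsHermitian.cfc, Unitary.conjStarAlgAut_apply, conj_trace _ hU1,
    Matrix.trace_diagonal, Complex.re_sum]
  simp

/-- Jordan decomposition realizing the trace norm of a Hermitian matrix. -/
lemma jordan {A : Matrix ι ι ℂ} (hA : A.IsHermitian) :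
    ∃ P Q : Matrix ι ι ℂ, P.PosSemidef ∧ Q.PosSemidef ∧ A = P - Q ∧
      traceNorm A = P.trace.re + Q.trace.re := by
  have hU1 : star (hA.eigenvectorUnitary : Matrix ι ι ℂ) * (hA.eigenvectorUnitary : Matrix ι ι ℂ)
      = 1 := mem_unitaryGroup_iff'.mp hA.eigenvectorUnitary.2
  set U : Matrix ι ι ℂ := (hA.eigenvectorUnitary : Matrix ι ι ℂ)
  refine ⟨U * Matrix.diagonal (fun i => ((max (hA.eigenvalues i) 0 : ℝ) : ℂ)) * star U,
    U * Matrix.diagonal (fun i => ((max (-hA.eigenvalues i) 0 : ℝ) : ℂ)) * star U,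
    conj_psd (Matrix.PosSemidef.diagonal (fun i => by
      simp only [Pi.zero_apply]; rw [Complex.zero_le_real]; exact le_max_right _ _)),
    conj_psd (Matrix.PosSemidef.diagonal (fun i => by
      simp only [Pi.zero_apply]; rw [Complex.zero_le_real]; exact le_max_right _ _)), ?_, ?_⟩
  · have hfun : (RCLike.ofReal ∘ hA.eigenvalues : ι → ℂ)
        = fun i => ((max (hA.eigenvalues i) 0 : ℝ) : ℂ) - ((max (-hA.eigenvalues i) 0 : ℝ) : ℂ) := by
      funext i
      simp only [Function.comp_apply]
      norm_cast
      rw [max_zero_sub_max_neg_zero_eq_self]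
      rfl
    calc A = U * Matrix.diagonal (RCLike.ofReal ∘ hA.eigenvalues) * star U :=
          hA.spectral_theorem
      _ = _ := by
          rw [hfun, ← Matrix.diagonal_sub, Matrix.mul_sub, Matrix.sub_mul]
  · rw [traceNorm_eq_sum_abs hA, conj_trace _ hU1, conj_trace _ hU1, Matrix.trace_diagonal,
      Matrix.trace_diagonal, Complex.re_sum, Complex.re_sum, ← Finset.sum_add_distrib]
    refine Finset.sum_congr rfl fun i _ => ?_
    simp only [Complex.ofReal_re]
    rcases le_or_gt 0 (hA.eigenvalues i) with h | h
    · rw [abs_of_nonneg h, max_eq_left h, max_eq_right (neg_nonpos.mpr h)]; ring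
    · rw [abs_of_neg h, max_eq_right h.le, max_eq_left (neg_nonneg.mpr h.le)]; ring

/-- Key inequality: trace norm of a difference of PSD matrices. -/
lemma traceNorm_sub_le {X Y : Matrix ι ι ℂ} (hX : X.PosSemidef) (hY : Y.PosSemidef) :
    traceNorm (X - Y) ≤ X.trace.re + Y.trace.re := by
  have hA : (X - Y).IsHermitian := hX.1.sub hY.1
  have hU1 : star (hA.eigenvectorUnitary : Matrix ι ι ℂ) * (hA.eigenvectorUnitary : Matrix ι ι ℂ)
      = 1 := mem_unitaryGroup_iff'.mp hA.eigenvectorUnitary.2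
  have hU2 : (hA.eigenvectorUnitary : Matrix ι ι ℂ) * star (hA.eigenvectorUnitary : Matrix ι ι ℂ)
      = 1 := mem_unitaryGroup_iff.mp hA.eigenvectorUnitary.2
  set U : Matrix ι ι ℂ := (hA.eigenvectorUnitary : Matrix ι ι ℂ)
  set lam := hA.eigenvalues with hlamdef
  have hdiag : star U * (X - Y) * U = Matrix.diagonal (RCLike.ofReal ∘ lam) :=
    by simpa using hA.conjStarAlgAut_star_eigenvectorUnitary
  set e : ι → ℂ := fun i => if lam i < 0 then 1 else 0 with hedef
  set e' : ι → ℂ := fun i => if lam i < 0 then 0 else 1 with he'def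
  set B : Matrix ι ι ℂ := U * Matrix.diagonal e with hBdef
  set C : Matrix ι ι ℂ := U * Matrix.diagonal e' with hCdef
  have hstare : star e = e := by
    funext i
    simp only [Pi.star_apply, hedef]
    by_cases h : lam i < 0 <;> simp [h]
  have hstare' : star e' = e' := by
    funext i
    simp only [Pi.star_apply, he'def]
    by_cases h : lam i < 0 <;> simp [h]
  have hBH : Bᴴ = Matrix.diagonal e * star U := by
    rw [hBdef, ← Matrix.star_eq_conjTranspose, Matrix.star_mul]
    congr 1
    rw [Matrix.star_eq_conjTranspose, Matrix.diagonal_conjTranspose, hstare]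
  have hCH : Cᴴ = Matrix.diagonal e' * star U := by
    rw [hCdef, ← Matrix.star_eq_conjTranspose, Matrix.star_mul]
    congr 1
    rw [Matrix.star_eq_conjTranspose, Matrix.diagonal_conjTranspose, hstare']
  have hee : (fun i => e i * e i) = e := by
    funext i; by_cases h : lam i < 0 <;> simp [hedef, h]
  have hee' : (fun i => e' i * e' i) = e' := by
    funext i; by_cases h : lam i < 0 <;> simp [he'def, h]
  have key : Bᴴ * (X - Y) * B
      = Matrix.diagonal (fun i => e i * (RCLike.ofReal ∘ lam) i * e i) := by
    rw [hBH, hBdef]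
    calc Matrix.diagonal e * star U * (X - Y) * (U * Matrix.diagonal e)
        = Matrix.diagonal e * (star U * (X - Y) * U) * Matrix.diagonal e := by
          simp only [Matrix.mul_assoc]
      _ = Matrix.diagonal (fun i => e i * (RCLike.ofReal ∘ lam) i * e i) := by
          rw [hdiag, Matrix.diagonal_mul_diagonal, Matrix.diagonal_mul_diagonal]
  have keytr : (Bᴴ * (X - Y) * B).trace.re = ∑ i, min (lam i) 0 := by
    rw [key, Matrix.trace_diagonal, Complex.re_sum]
    refine Finset.sum_congr rfl fun i _ => ?_
    by_cases h : lam i < 0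
    · simp [hedef, h, min_eq_left h.le]
    · simp [hedef, h, min_eq_right (not_lt.mp h)]
  have hXB : 0 ≤ (Bᴴ * X * B).trace.re :=
    psd_trace_re_nonneg (hX.conjTranspose_mul_mul_same B)
  have hYB : (Bᴴ * Y * B).trace.re ≤ Y.trace.re := by
    have hBB : B * Bᴴ = U * Matrix.diagonal e * star U := by
      rw [hBH, hBdef]
      calc U * Matrix.diagonal e * (Matrix.diagonal e * star U)
          = U * (Matrix.diagonal e * Matrix.diagonal e * star U) := by
            simp only [Matrix.mul_assoc]
        _ = U * Matrix.diagonal e * star U := by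
            rw [Matrix.diagonal_mul_diagonal, hee, ← Matrix.mul_assoc]
    have hCC : C * Cᴴ = U * Matrix.diagonal e' * star U := by
      rw [hCH, hCdef]
      calc U * Matrix.diagonal e' * (Matrix.diagonal e' * star U)
          = U * (Matrix.diagonal e' * Matrix.diagonal e' * star U) := by
            simp only [Matrix.mul_assoc]
        _ = U * Matrix.diagonal e' * star U := by
            rw [Matrix.diagonal_mul_diagonal, hee', ← Matrix.mul_assoc]
    have hsumBC : B * Bᴴ + C * Cᴴ = 1 := by
      have hone : (fun i => e i + e' i) = fun _ => (1 : ℂ) := by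
        funext i
        by_cases h : lam i < 0 <;> simp [hedef, he'def, h]
      rw [hBB, hCC, Matrix.mul_assoc U (Matrix.diagonal e), Matrix.mul_assoc U (Matrix.diagonal e'),
        ← Matrix.mul_add, ← Matrix.add_mul, Matrix.diagonal_add, hone, Matrix.diagonal_one,
        Matrix.one_mul, hU2]
    have hsplit : (Bᴴ * Y * B).trace + (Cᴴ * Y * C).trace = Y.trace := by
      rw [Matrix.trace_mul_cycle Bᴴ Y B, Matrix.trace_mul_cycle Cᴴ Y C, ← Matrix.trace_add,
        ← Matrix.add_mul, hsumBC, Matrix.one_mul]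
    have hCYC : 0 ≤ (Cᴴ * Y * C).trace.re :=
      psd_trace_re_nonneg (hY.conjTranspose_mul_mul_same C)
    have := congrArg Complex.re hsplit
    rw [Complex.add_re] at this
    linarith
  have hTN : traceNorm (X - Y) = ∑ i, |lam i| := traceNorm_eq_sum_abs hA
  have hsum : ∑ i, |lam i| = (∑ i, lam i) - 2 * ∑ i, min (lam i) 0 := by
    rw [Finset.mul_sum, ← Finset.sum_sub_distrib]
    refine Finset.sum_congr rfl fun i _ => ?_
    rcases le_or_gt 0 (lam i) with h | h
    · rw [abs_of_nonneg h, min_eq_right h]; ring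
    · rw [abs_of_neg h, min_eq_left h.le]; ring
  have htrA : ∑ i, lam i = X.trace.re - Y.trace.re := by
    have h2 := congrArg Matrix.trace hdiag
    rw [Matrix.trace_mul_cycle, hU2, Matrix.one_mul, Matrix.trace_diagonal] at h2
    have h3 := congrArg Complex.re h2
    rw [Matrix.trace_sub, Complex.sub_re, Complex.re_sum] at h3
    have hco : (RCLike.ofReal : ℝ → ℂ) = Complex.ofReal := rfl
    simp only [Function.comp_apply, hco, Complex.ofReal_re] at h3
    linarith
  have hBsub : (Bᴴ * (X - Y) * B).trace.re = (Bᴴ * X * B).trace.re - (Bᴴ * Y * B).trace.re := by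
    have : Bᴴ * (X - Y) * B = Bᴴ * X * B - Bᴴ * Y * B := by
      rw [Matrix.mul_sub, Matrix.sub_mul]
    rw [this, Matrix.trace_sub, Complex.sub_re]
  have hmin : ∑ i, min (lam i) 0 ≥ - Y.trace.re := by
    rw [← keytr, hBsub]; linarith
  rw [hTN, hsum, htrA]
  linarith

/-- A channel maps PSD matrices to PSD matrices. -/
lemma channel_psd (N : Channel ι) {X : Matrix ι ι ℂ} (hX : X.PosSemidef) :
    (N.map X).PosSemidef := by
  have hM : (X.submatrix (Prod.snd : Fin 1 × ι → ι) Prod.snd).PosSemidef := hX.submatrix _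
  have h := N.cp 1 _ hM
  have heq : idTensorMap 1 N.map (X.submatrix (Prod.snd : Fin 1 × ι → ι) Prod.snd)
      = (N.map X).submatrix (Prod.snd : Fin 1 × ι → ι) Prod.snd := rfl
  rw [heq] at h
  have h2 := h.submatrix (fun i => ((0 : Fin 1), i))
  rw [Matrix.submatrix_submatrix] at h2
  simpa [Function.comp] using h2

/-- Triangle inequality for the trace norm of Hermitian matrices. -/
lemma traceNorm_add_le {A B : Matrix ι ι ℂ} (hA : A.IsHermitian) (hB : B.IsHermitian) :
    traceNorm (A + B) ≤ traceNorm A + traceNorm B := by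
  obtain ⟨P, Q, hP, hQ, hPQ, hTA⟩ := jordan hA
  obtain ⟨R, S, hR, hS, hRS, hTB⟩ := jordan hB
  have hsplit : A + B = (P + R) - (Q + S) := by rw [hPQ, hRS]; abel
  rw [hsplit, hTA, hTB]
  have h := traceNorm_sub_le (hP.add hR) (hQ.add hS)
  rw [Matrix.trace_add, Matrix.trace_add, Complex.add_re, Complex.add_re] at h
  linarith

/-- Contractivity of the trace norm under channels, for Hermitian inputs. -/
lemma traceNorm_map_le (N : Channel ι) {A : Matrix ι ι ℂ} (hA : A.IsHermitian) :
    traceNorm (N.map A) ≤ traceNorm A := by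
  obtain ⟨P, Q, hP, hQ, hPQ, hTA⟩ := jordan hA
  have h1 : N.map A = N.map P - N.map Q := by rw [hPQ, map_sub]
  rw [h1, hTA]
  calc traceNorm (N.map P - N.map Q) ≤ (N.map P).trace.re + (N.map Q).trace.re :=
        traceNorm_sub_le (channel_psd N hP) (channel_psd N hQ)
    _ = P.trace.re + Q.trace.re := by rw [N.tp, N.tp]

end Aux

/-- the success probability of discriminating `N` from the free channels with any
probe state `ρ` is bounded by `1/2 + Ω₁(N)/2 + ω₁(ρ)/2`. -/
theorem stmt9
    (F : Set (Matrix ι ι ℂ)) (hFne : F.Nonempty) (hFstate : ∀ ρ ∈ F, IsState ρ)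
    (hFconv : Convex ℝ F) (hFclosed : IsClosed F)
    (Free : Set (Channel ι))
    (hFree : ∀ M ∈ Free, ∀ ρ ∈ F, M.map ρ ∈ F)
    (hRepl : ∀ σ ∈ F, ∃ M ∈ Free, ∀ τ : Matrix ι ι ℂ, M.map τ = τ.trace • σ)
    (N : Channel ι) (ρ : Matrix ι ι ℂ) (hρ : IsState ρ) :
    psuccChan (⇑N.map) Free ρ
      ≤ 1/2 + (1/2) * genPower1 F (⇑N.map) + (1/2) * omega1 F ρ := by
  obtain ⟨σ₀, hσ₀⟩ := hFne
  have hSne : ∀ τ : Matrix ι ι ℂ, ((fun σ => traceNorm (τ - σ)) '' F).Nonempty :=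
    fun τ => ⟨_, ⟨σ₀, hσ₀, rfl⟩⟩
  have hSbdd : ∀ τ : Matrix ι ι ℂ, BddBelow ((fun σ => traceNorm (τ - σ)) '' F) := by
    intro τ
    refine ⟨0, fun x hx => ?_⟩
    obtain ⟨σ, _, rfl⟩ := hx
    exact Aux.traceNorm_nonneg _
  have hstate_trace : ∀ τ : Matrix ι ι ℂ, IsState τ → τ.trace.re = 1 := by
    intro τ hτ; rw [hτ.2]; simp
  -- ω₁ of any state is at most 1
  have homega_le : ∀ τ : Matrix ι ι ℂ, IsState τ → omega1 F τ ≤ 1 := by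
    intro τ hτ
    have h1 : traceNorm (τ - σ₀) ≤ 2 := by
      have h := Aux.traceNorm_sub_le hτ.1 (hFstate σ₀ hσ₀).1
      rw [hstate_trace τ hτ, hstate_trace σ₀ (hFstate σ₀ hσ₀)] at h
      linarith
    have h2 : sInf ((fun σ => traceNorm (τ - σ)) '' F) ≤ 2 :=
      le_trans (csInf_le (hSbdd τ) ⟨σ₀, hσ₀, rfl⟩) h1
    rw [omega1]; linarith
  -- N maps states to states
  have hNstate : ∀ τ : Matrix ι ι ℂ, IsState τ → IsState (N.map τ) := by
    intro τ hτ
    exact ⟨Aux.channel_psd N hτ.1, by rw [N.tp, hτ.2]⟩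
  refine le_of_forall_pos_le_add fun ε hε => ?_
  -- choose σ ∈ F with traceNorm (ρ - σ) < 2 ω₁(ρ) + ε
  have hwdef : sInf ((fun σ => traceNorm (ρ - σ)) '' F) = 2 * omega1 F ρ := by
    rw [omega1]; ring
  obtain ⟨x, ⟨σ, hσF, rfl⟩, hσlt⟩ := (csInf_lt_iff (hSbdd ρ) (hSne ρ)).mp
    (show sInf ((fun σ => traceNorm (ρ - σ)) '' F) < 2 * omega1 F ρ + ε by
      rw [← hwdef]; exact lt_add_of_pos_right _ hε)
  -- ω₁(N σ) ≤ Ω₁(N)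
  have hbddg : BddAbove ((fun τ => omega1 F (N.map τ)) '' F) := by
    refine ⟨1, fun x hx => ?_⟩
    obtain ⟨τ, hτF, rfl⟩ := hx
    exact homega_le _ (hNstate _ (hFstate τ hτF))
  have hgσ : omega1 F (N.map σ) ≤ genPower1 F (⇑N.map) :=
    le_csSup hbddg ⟨σ, hσF, rfl⟩
  -- choose σ'' ∈ F with traceNorm (N σ - σ'') < 2 Ω₁(N) + ε
  have hw2 : sInf ((fun σ'' => traceNorm (N.map σ - σ'')) '' F) = 2 * omega1 F (N.map σ) := by
    rw [omega1]; ring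
  obtain ⟨y, ⟨σ'', hσ''F, rfl⟩, hσ''lt⟩ := (csInf_lt_iff (hSbdd (N.map σ)) (hSne (N.map σ))).mp
    (show sInf ((fun σ'' => traceNorm (N.map σ - σ'')) '' F)
        < 2 * genPower1 F (⇑N.map) + ε by
      rw [hw2]
      calc 2 * omega1 F (N.map σ) < 2 * omega1 F (N.map σ) + ε := lt_add_of_pos_right _ hε
        _ ≤ 2 * genPower1 F (⇑N.map) + ε := by linarith)
  -- the replacement channel
  obtain ⟨M, hMF, hMdef⟩ := hRepl σ'' hσ''F
  have hMρ : M.map ρ = σ'' := by rw [hMdef, hρ.2, one_smul]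
  -- bound psuccChan by the pair success probability against M
  have hpcbdd : BddBelow ((fun M' : Channel ι => psuccPair (⇑N.map) (⇑M'.map) ρ) '' Free) := by
    refine ⟨1/2, fun x hx => ?_⟩
    obtain ⟨M', _, rfl⟩ := hx
    have := Aux.traceNorm_nonneg (N.map ρ - M'.map ρ)
    simp only [psuccPair]; linarith
  have hle : psuccChan (⇑N.map) Free ρ ≤ psuccPair (⇑N.map) (⇑M.map) ρ :=
    csInf_le hpcbdd ⟨M, hMF, rfl⟩
  -- triangle + contractivity
  have hherm : ∀ τ : Matrix ι ι ℂ, IsState τ → τ.IsHermitian := fun τ hτ => hτ.1.1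
  have tri : traceNorm (N.map ρ - σ'')
      ≤ traceNorm (N.map ρ - N.map σ) + traceNorm (N.map σ - σ'') := by
    have hsplit : N.map ρ - σ'' = (N.map ρ - N.map σ) + (N.map σ - σ'') := by abel
    rw [hsplit]
    exact Aux.traceNorm_add_le
      (((hNstate ρ hρ).1.1).sub ((hNstate σ (hFstate σ hσF)).1.1))
      (((hNstate σ (hFstate σ hσF)).1.1).sub ((hFstate σ'' hσ''F).1.1))
  have hc : traceNorm (N.map ρ - N.map σ) ≤ traceNorm (ρ - σ) := by
    rw [← map_sub]
    exact Aux.traceNorm_map_le N ((hρ.1.1).sub ((hFstate σ hσF).1.1))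
  have hpair : psuccPair (⇑N.map) (⇑M.map) ρ
      = 1/2 + (1/4) * traceNorm (N.map ρ - σ'') := by
    simp only [psuccPair]
    rw [hMρ]
  rw [hpair] at hle
  have hfinal : traceNorm (N.map ρ - σ'')
      < (2 * omega1 F ρ + ε) + (2 * genPower1 F (⇑N.map) + ε) := by
    calc traceNorm (N.map ρ - σ'')
        ≤ traceNorm (N.map ρ - N.map σ) + traceNorm (N.map σ - σ'') := tri
      _ ≤ traceNorm (ρ - σ) + traceNorm (N.map σ - σ'') := by linarith
      _ < (2 * omega1 F ρ + ε) + (2 * genPower1 F (⇑N.map) + ε) := by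
          exact add_lt_add hσlt hσ''lt
  linarith
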